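/- For any 0 < m < k ≤ n and any z ∈ ℂ_+, the difference ν_{n,k}(P_z) − ν_{n,k−1}(P_z) is equal in distribution to 2^{−(n−k)} Σ_{j=1}^{2^{n−k}} ( ν_k^{(j)}(P_z) − ν_{k,k−1}^{(j)}(P_z) ), where for j = 1,…,2^{n−k} the pairs (ν_k^{(j)}, ν_{k,k−1}^{(j)}) are independent and each is distributed as the pair of finite-volume density of states measures (ν_k, ν_{k,k−1}) of an independent copy of (H_k, H_{k,k−1}). -/

import Mathlib

open MeasureTheory ProbabilityTheory Filter
open scoped BigOperators ENNReal NNReal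

noncomputable section

instance matrixMeasurableSpace {m n α : Type*} [MeasurableSpace α] :
    MeasurableSpace (Matrix m n α) :=
  (inferInstance : MeasurableSpace (m → n → α))

/-- Hierarchical (ultrametric) distance on `ℕ` (`0`-indexed): the least `r` such that `x` and
`y` lie in a common block of the partition into consecutive blocks of size `2 ^ r`. -/
def hdist (x y : ℕ) : ℕ := sInf {r | x / 2 ^ r = y / 2 ^ r}

/-- The variance of the `(x, y)` entry of the hierarchical Gaussian matrix `Φ_{n,r}`. -/
def entryVar (r x y : ℕ) : ℝ≥0 :=
  if hdist x y = 0 then 2 * (2 : ℝ≥0)⁻¹ ^ r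
  else if hdist x y ≤ r then (2 : ℝ≥0)⁻¹ ^ r
  else 0

/-- The family `Φ_{n,r}`, `0 ≤ r ≤ n`, of independent hierarchical GOE-block matrices:
symmetric random matrices on `ℓ²(B_n)`, `B_n = {1, …, 2^n}`, whose entries are independent
(up to symmetry) centered real Gaussians with variance `entryVar r x y` (in particular the
entries with `hdist x y > r` vanish identically). -/
structure UltrametricField (Ω : Type*) [MeasureSpace Ω] where
  Φ : (n : ℕ) → (r : ℕ) → Ω → Matrix (Fin (2 ^ n)) (Fin (2 ^ n)) ℝ
  meas : ∀ n r (x y : Fin (2 ^ n)), Measurable fun ω => Φ n r ω x y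
  herm : ∀ n r ω, (Φ n r ω).IsHermitian
  zero : ∀ n r ω (x y : Fin (2 ^ n)), r < hdist (x : ℕ) (y : ℕ) → Φ n r ω x y = 0
  gauss : ∀ n r, r ≤ n → ∀ x y : Fin (2 ^ n),
    Measure.map (fun ω => Φ n r ω x y) ℙ = gaussianReal 0 (entryVar r (x : ℕ) (y : ℕ))
  indep : ∀ n : ℕ,
    iIndepFun
      (fun p : {p : ℕ × Fin (2 ^ n) × Fin (2 ^ n) // p.1 ≤ n ∧ (p.2.1 : ℕ) ≤ (p.2.2 : ℕ)} =>
        fun ω => Φ n p.1.1 ω p.1.2.1 p.1.2.2) ℙ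

namespace UltrametricField

variable {Ω : Type*} [MeasureSpace Ω] (F : UltrametricField Ω)

/-- The truncated Hamiltonian `H_{n,m} = ∑_{r=0}^m 2^{-(1+c)r/2} Φ_{n,r}`
(normalization constant omitted, as appropriate for `c > 0`). -/
def Htrunc (c : ℝ) (n m : ℕ) (ω : Ω) : Matrix (Fin (2 ^ n)) (Fin (2 ^ n)) ℝ :=
  ∑ r ∈ Finset.range (m + 1), ((2 : ℝ) ^ (-((1 + c) / 2) * (r : ℝ))) • F.Φ n r ω

/-- The ultrametric ensemble `H_n = ∑_{r=0}^n 2^{-(1+c)r/2} Φ_{n,r}`. -/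
def H (c : ℝ) (n : ℕ) : Ω → Matrix (Fin (2 ^ n)) (Fin (2 ^ n)) ℝ := F.Htrunc c n n

lemma isHermitian_Htrunc (c : ℝ) (n m : ℕ) (ω : Ω) : (F.Htrunc c n m ω).IsHermitian := by
  unfold Htrunc Matrix.IsHermitian
  rw [Matrix.conjTranspose_sum]
  refine Finset.sum_congr rfl fun r _ => ?_
  rw [Matrix.conjTranspose_smul]
  have h := F.herm n r ω
  unfold Matrix.IsHermitian at h
  rw [h]
  norm_num

lemma isHermitian_H (c : ℝ) (n : ℕ) (ω : Ω) : (F.H c n ω).IsHermitian :=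
  F.isHermitian_Htrunc c n n ω

/-- The eigenvalues of the truncated Hamiltonian `H_{n,m}`. -/
def eigTrunc (c : ℝ) (n m : ℕ) (ω : Ω) : Fin (2 ^ n) → ℝ :=
  (F.isHermitian_Htrunc c n m ω).eigenvalues

/-- The eigenvalues of `H_n`. -/
def eig (c : ℝ) (n : ℕ) (ω : Ω) : Fin (2 ^ n) → ℝ := F.eigTrunc c n n ω

/-- The `ℓ²`-normalized eigenfunctions of `H_n`. -/
def eigvec (c : ℝ) (n : ℕ) (ω : Ω) (i : Fin (2 ^ n)) : EuclideanSpace ℝ (Fin (2 ^ n)) :=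
  (F.isHermitian_H c n ω).eigenvectorBasis i

/-- The finite-volume density of states measure applied to `f`:
`ν_{n,m}(f) = 2^{-n} Tr f(H_{n,m})`. -/
def nuTrunc (c : ℝ) (n m : ℕ) (f : ℝ → ℝ) (ω : Ω) : ℝ :=
  (2 ^ n : ℝ)⁻¹ * ∑ i, f (F.eigTrunc c n m ω i)

/-- `ν_n(f) = 2^{-n} Tr f(H_n)`. -/
def nu (c : ℝ) (n : ℕ) (f : ℝ → ℝ) (ω : Ω) : ℝ := F.nuTrunc c n n f ω

/-- The rescaled eigenvalue process of the truncation: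
`μ_{n,m}(f) = ∑_{λ ∈ σ(H_{n,m})} f(2^n (λ - E))`. -/
def muTrunc (c E : ℝ) (n m : ℕ) (f : ℝ → ℝ) (ω : Ω) : ℝ :=
  ∑ i, f ((2 ^ n : ℝ) * (F.eigTrunc c n m ω i - E))

/-- The rescaled eigenvalue process `μ_n(f) = ∑_{λ ∈ σ(H_n)} f(2^n (λ - E))`. -/
def mu (c E : ℝ) (n : ℕ) (f : ℝ → ℝ) (ω : Ω) : ℝ := F.muTrunc c E n n f ω

/-- The number of rescaled eigenvalues of `H_{n,m}` in `B`, i.e. `μ_{n,m}(1_B)`. -/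
def muCount (c E : ℝ) (n m : ℕ) (B : Set ℝ) (ω : Ω) : ℕ :=
  ∑ i, Set.indicator B (fun _ => 1) ((2 ^ n : ℝ) * (F.eigTrunc c n m ω i - E))

/-- The index embedding of the `j`-th block of size `2 ^ k` into `B_n`. -/
def blockIdx {n k : ℕ} (hkn : k ≤ n) (j : Fin (2 ^ (n - k))) (a : Fin (2 ^ k)) : Fin (2 ^ n) :=
  ⟨(j : ℕ) * 2 ^ k + (a : ℕ), by
    have h1 : (j : ℕ) + 1 ≤ 2 ^ (n - k) := j.isLt
    have h2 : ((j : ℕ) + 1) * 2 ^ k ≤ 2 ^ (n - k) * 2 ^ k := Nat.mul_le_mul_right _ h1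
    have h3 : 2 ^ (n - k) * 2 ^ k = 2 ^ n := by rw [← pow_add]; congr 1; omega
    have h4 : ((j : ℕ) + 1) * 2 ^ k = (j : ℕ) * 2 ^ k + 2 ^ k := by ring
    have h5 : (a : ℕ) < 2 ^ k := a.isLt
    omega⟩

/-- The `j`-th diagonal block (at scale `k`) of the truncated Hamiltonian `H_{n,m}`. -/
def blockMat (c : ℝ) {n k : ℕ} (hkn : k ≤ n) (m : ℕ) (j : Fin (2 ^ (n - k))) (ω : Ω) :
    Matrix (Fin (2 ^ k)) (Fin (2 ^ k)) ℝ :=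
  (F.Htrunc c n m ω).submatrix (blockIdx hkn j) (blockIdx hkn j)

lemma isHermitian_blockMat (c : ℝ) {n k : ℕ} (hkn : k ≤ n) (m : ℕ) (j : Fin (2 ^ (n - k)))
    (ω : Ω) : (F.blockMat c hkn m j ω).IsHermitian :=
  (F.isHermitian_Htrunc c n m ω).submatrix _

/-- The eigenvalues of the `j`-th block of `H_{n,m}`. -/
def blockEig (c : ℝ) {n k : ℕ} (hkn : k ≤ n) (m : ℕ) (j : Fin (2 ^ (n - k))) (ω : Ω) :
    Fin (2 ^ k) → ℝ :=
  (F.isHermitian_blockMat c hkn m j ω).eigenvalues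

/-- The number of rescaled eigenvalues of the `j`-th block of `H_{n,m}` lying in `B`,
i.e. `μ_{k,j}(1_B)` where `μ_{k,j}(f) = ∑_{λ ∈ σ(H^{(j)}_{k,m})} f(2^n (λ - E))`. -/
def blockCount (c E : ℝ) {n k : ℕ} (hkn : k ≤ n) (m : ℕ) (j : Fin (2 ^ (n - k))) (ω : Ω)
    (B : Set ℝ) : ℕ :=
  ∑ i, Set.indicator B (fun _ => 1) ((2 ^ n : ℝ) * (F.blockEig c hkn m j ω i - E))

/-- The Green function `G_{n,m}(x,y;z) = ⟨δ_y, (H_{n,m} - z)^{-1} δ_x⟩`. -/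
def Green (c : ℝ) (n m : ℕ) (z : ℂ) (ω : Ω) (x y : Fin (2 ^ n)) : ℂ :=
  ((F.Htrunc c n m ω).map (fun a => (a : ℂ)) - z • (1 : Matrix (Fin (2 ^ n)) (Fin (2 ^ n)) ℂ))⁻¹ x y

/-- The eigenfunction correlator `Q_n(x,y;W) = ∑_{λ ∈ σ(H_n) ∩ W} |ψ_λ(x) ψ_λ(y)|`. -/
def Qcorr (c : ℝ) (n : ℕ) (ω : Ω) (x y : Fin (2 ^ n)) (W : Set ℝ) : ℝ :=
  ∑ i, Set.indicator W (fun _ => |F.eigvec c n ω i x * F.eigvec c n ω i y|) (F.eig c n ω i)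

end UltrametricField

/-- The square `Z_{n,c}²` of the normalizing constant:
`Z_{n,c}² = ∑_{r=0}^n 2^{-(1+c)r} (1 + 2^{-r})`. -/
def Zsq (c : ℝ) (n : ℕ) : ℝ :=
  ∑ r ∈ Finset.range (n + 1), (2 : ℝ) ^ (-(1 + c) * (r : ℝ)) * (1 + (2 : ℝ) ^ (-(r : ℝ)))

namespace UltrametricField

variable {Ω : Type*} [MeasureSpace Ω] (F : UltrametricField Ω)

/-- The normalized ultrametric ensemble `Z_{n,c}^{-1} ∑_{r=0}^n 2^{-(1+c)r/2} Φ_{n,r}`. -/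
def Hnorm (c : ℝ) (n : ℕ) (ω : Ω) : Matrix (Fin (2 ^ n)) (Fin (2 ^ n)) ℝ :=
  (Real.sqrt (Zsq c n))⁻¹ • F.H c n ω

lemma isHermitian_Hnorm (c : ℝ) (n : ℕ) (ω : Ω) : (F.Hnorm c n ω).IsHermitian := by
  unfold Hnorm Matrix.IsHermitian
  rw [Matrix.conjTranspose_smul]
  have h := F.isHermitian_H c n ω
  unfold Matrix.IsHermitian at h
  rw [h]
  norm_num

/-- The eigenvalues of the normalized ultrametric ensemble. -/
def eigNorm (c : ℝ) (n : ℕ) (ω : Ω) : Fin (2 ^ n) → ℝ :=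
  (F.isHermitian_Hnorm c n ω).eigenvalues

/-- The `ℓ²`-normalized eigenfunctions of the normalized ultrametric ensemble. -/
def eigvecNorm (c : ℝ) (n : ℕ) (ω : Ω) (i : Fin (2 ^ n)) : EuclideanSpace ℝ (Fin (2 ^ n)) :=
  (F.isHermitian_Hnorm c n ω).eigenvectorBasis i

/-- The spread `M_n = (max_{x,y} E|⟨δ_y, H_n δ_x⟩|²)^{-1}` of the normalized ensemble. -/
def spread (c : ℝ) (n : ℕ) : ℝ :=
  (⨆ x : Fin (2 ^ n), ⨆ y : Fin (2 ^ n), ∫ ω, (F.Hnorm c n ω x y) ^ 2 ∂ℙ)⁻¹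

/-- The eigenvalues of the GOE matrix `Φ_{n,n}` of size `2^n`. -/
def eigGOE (n : ℕ) (ω : Ω) : Fin (2 ^ n) → ℝ := (F.herm n n ω).eigenvalues

end UltrametricField

/-- The rescaled Poisson kernel `P_z(λ) = Im (λ - z)^{-1}`. -/
def Pker (z : ℂ) (l : ℝ) : ℝ := z.im / ((l - z.re) ^ 2 + z.im ^ 2)

/-- `E` is a Lebesgue point of `g`. -/
def LebesguePoint (g : ℝ → ℝ) (E : ℝ) : Prop :=
  Tendsto (fun r : ℝ => (2 * r)⁻¹ * ∫ l in Set.Icc (E - r) (E + r), |g l - g E|)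
    (nhdsWithin 0 (Set.Ioi 0)) (nhds 0)

/-- `g` is the (bounded) density of the infinite-volume density of states measure `ν`,
defined by `ν(f) = lim_{n → ∞} 2^{-n} ∑_{λ ∈ σ(H_n)} f(λ)`. -/
def UltrametricField.IsDOSDensity {Ω : Type*} [MeasureSpace Ω] (F : UltrametricField Ω)
    (c : ℝ) (g : ℝ → ℝ) : Prop :=
  Measurable g ∧ (∀ l, 0 ≤ g l) ∧ (∃ K, ∀ l, g l ≤ K) ∧
    ∀ f : ℝ → ℝ, Continuous f → HasCompactSupport f →
      Tendsto (fun n => ∫ ω, F.nu c n f ω ∂ℙ) atTop (nhds (∫ l, f l * g l))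

/-- The density of the semicircle law, `ρ_sc(E) = √((4 - E²)₊) / (2π)`. -/
def rhoSC (E : ℝ) : ℝ := Real.sqrt (max (4 - E ^ 2) 0) / (2 * Real.pi)

end


noncomputable section TelescopicAux

namespace TelescopicAux

lemma hdist_le {x y r : ℕ} (h : x / 2 ^ r = y / 2 ^ r) : hdist x y ≤ r :=
  Nat.sInf_le h

lemma hdist_spec (x y : ℕ) : x / 2 ^ hdist x y = y / 2 ^ hdist x y := by
  have hx : x < 2 ^ (x + y) :=
    lt_of_lt_of_le ((Nat.lt_two_pow_self (n := x))) (Nat.pow_le_pow_right (by norm_num) (by omega))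
  have hy : y < 2 ^ (x + y) :=
    lt_of_lt_of_le ((Nat.lt_two_pow_self (n := y))) (Nat.pow_le_pow_right (by norm_num) (by omega))
  have hne : {r | x / 2 ^ r = y / 2 ^ r}.Nonempty :=
    ⟨x + y, by simp [Nat.div_eq_of_lt hx, Nat.div_eq_of_lt hy]⟩
  exact Nat.sInf_mem hne

lemma hdist_self (x : ℕ) : hdist x x = 0 :=
  Nat.le_zero.mp (hdist_le (r := 0) rfl)

lemma mul_add_div_eq {Q j s : ℕ} (hQ : 0 < Q) (hs : s < Q) : (j * Q + s) / Q = j := by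
  rw [add_comm, Nat.add_mul_div_right _ _ hQ, Nat.div_eq_of_lt hs, zero_add]

lemma div_block {j a k r : ℕ} (hr : r ≤ k) :
    (j * 2 ^ k + a) / 2 ^ r = j * 2 ^ (k - r) + a / 2 ^ r := by
  have h : j * 2 ^ k = j * 2 ^ (k - r) * 2 ^ r := by
    rw [mul_assoc, ← pow_add]
    congr 2
    omega
  rw [h, add_comm (j * 2 ^ (k - r) * 2 ^ r) a,
    Nat.add_mul_div_right _ _ (Nat.two_pow_pos r), add_comm]

lemma block_quot_high {j a k r : ℕ} (ha : a < 2 ^ k) (hr : k ≤ r) :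
    (j * 2 ^ k + a) / 2 ^ r = j / 2 ^ (r - k) := by
  have h : 2 ^ r = 2 ^ k * 2 ^ (r - k) := by
    rw [← pow_add]; congr 1; omega
  rw [h, ← Nat.div_div_eq_div_mul, mul_add_div_eq (Nat.two_pow_pos k) ha]

lemma hdist_block {k j a b : ℕ} (ha : a < 2 ^ k) (hb : b < 2 ^ k) :
    hdist (j * 2 ^ k + a) (j * 2 ^ k + b) = hdist a b := by
  unfold hdist
  congr 1
  ext r
  simp only [Set.mem_setOf_eq]
  rcases le_or_gt r k with hr | hr
  · rw [div_block hr, div_block hr]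
    exact ⟨fun h => Nat.add_left_cancel h, fun h => by rw [h]⟩
  · have hk : k ≤ r := hr.le
    have h2 : (2 : ℕ) ^ k ≤ 2 ^ r := Nat.pow_le_pow_right (by norm_num) hk
    rw [block_quot_high ha hk, block_quot_high hb hk]
    exact iff_of_true rfl
      (by rw [Nat.div_eq_of_lt (lt_of_lt_of_le ha h2), Nat.div_eq_of_lt (lt_of_lt_of_le hb h2)])

lemma hdist_block_gt {k j j' a b : ℕ} (ha : a < 2 ^ k) (hb : b < 2 ^ k) (hjj : j ≠ j') :
    k < hdist (j * 2 ^ k + a) (j' * 2 ^ k + b) := by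
  by_contra hcon
  push_neg at hcon
  have hs := hdist_spec (j * 2 ^ k + a) (j' * 2 ^ k + b)
  set r := hdist (j * 2 ^ k + a) (j' * 2 ^ k + b) with hr
  rw [div_block hcon, div_block hcon] at hs
  have hQ : (0 : ℕ) < 2 ^ (k - r) := Nat.two_pow_pos _
  have h1 : a / 2 ^ r < 2 ^ (k - r) := by
    rw [Nat.div_lt_iff_lt_mul (Nat.two_pow_pos r), ← pow_add]
    have : k - r + r = k := by omega
    rw [this]; exact ha
  have h2 : b / 2 ^ r < 2 ^ (k - r) := by
    rw [Nat.div_lt_iff_lt_mul (Nat.two_pow_pos r), ← pow_add]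
    have : k - r + r = k := by omega
    rw [this]; exact hb
  have : j = j' := by
    have e1 := mul_add_div_eq (j := j) hQ h1
    have e2 := mul_add_div_eq (j := j') hQ h2
    rw [← e1, ← e2, hs]
  exact hjj this

lemma blockIdx_ne {k j j' a b : ℕ} (ha : a < 2 ^ k) (hb : b < 2 ^ k) (hjj : j ≠ j') :
    j * 2 ^ k + a ≠ j' * 2 ^ k + b := by
  intro h
  have := hdist_block_gt ha hb hjj
  rw [h, hdist_self] at this
  omega

lemma entryVar_block {k j a b : ℕ} (ha : a < 2 ^ k) (hb : b < 2 ^ k) (r : ℕ) :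
    entryVar r (j * 2 ^ k + a) (j * 2 ^ k + b) = entryVar r a b := by
  unfold entryVar
  rw [hdist_block ha hb]

end TelescopicAux

end TelescopicAux



namespace TelescopicAux

open Matrix

lemma resolvent_spec {m : Type*} [Fintype m] [DecidableEq m]
    {M : Matrix m m ℝ} (hM : M.IsHermitian) {z : ℂ} (hz : z.im ≠ 0) :
    ∃ B : Matrix m m ℂ,
      (M.map (fun a => (a : ℂ)) - z • 1) * B = 1 ∧
      B * (M.map (fun a => (a : ℂ)) - z • 1) = 1 ∧
      B.trace = ∑ i, ((hM.eigenvalues i : ℂ) - z)⁻¹ := by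
  classical
  set U : Matrix m m ℝ := (hM.eigenvectorUnitary : Matrix m m ℝ) with hUdef
  have hU1 : U * star U = 1 := mem_unitaryGroup_iff.mp hM.eigenvectorUnitary.2
  have hU2 : star U * U = 1 := mem_unitaryGroup_iff'.mp hM.eigenvectorUnitary.2
  set φ : Matrix m m ℝ →+* Matrix m m ℂ := (Complex.ofRealHom).mapMatrix with hφdef
  set Uc : Matrix m m ℂ := φ U with hUc
  set Vc : Matrix m m ℂ := φ (star U) with hVc
  have hUVc : Uc * Vc = 1 := by rw [hUc, hVc, ← _root_.map_mul, hU1, _root_.map_one]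
  have hVUc : Vc * Uc = 1 := by rw [hUc, hVc, ← _root_.map_mul, hU2, _root_.map_one]
  set lam : m → ℝ := hM.eigenvalues with hlam
  have hne : ∀ i, ((lam i : ℂ) - z) ≠ 0 := by
    intro i h
    apply hz
    have := congrArg Complex.im h
    simpa using this.symm
  have hsandwich : ∀ D E : Matrix m m ℂ,
      (Uc * D * Vc) * (Uc * E * Vc) = Uc * (D * E) * Vc := by
    intro D E
    calc (Uc * D * Vc) * (Uc * E * Vc) = Uc * (D * ((Vc * Uc) * (E * Vc))) := by
          simp only [mul_assoc]
      _ = Uc * (D * E) * Vc := by rw [hVUc, one_mul]; simp only [mul_assoc]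
  have hA : M.map (fun a => (a : ℂ)) - z • 1 =
      Uc * diagonal (fun i => (lam i : ℂ) - z) * Vc := by
    have hmap : M.map (fun a => (a : ℂ)) = Uc * diagonal (fun i => ((lam i : ℝ) : ℂ)) * Vc := by
      have hspec := hM.spectral_theorem
      have h0 : M.map (fun a => (a : ℂ)) = φ M := rfl
      rw [h0]
      conv_lhs => rw [hspec, Unitary.conjStarAlgAut_apply]
      rw [_root_.map_mul, _root_.map_mul]
      congr 1
      congr 1
      have h1 : φ (diagonal (RCLike.ofReal ∘ lam)) =
          (diagonal (RCLike.ofReal ∘ lam)).map Complex.ofRealHom := rfl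
      rw [h1, diagonal_map (by simp)]
      simp [RCLike.ofReal_real_eq_id]
    have hone : z • (1 : Matrix m m ℂ) = Uc * (z • 1) * Vc := by
      rw [mul_smul_comm, mul_one, smul_mul_assoc, hUVc]
    rw [hmap, hone, ← Matrix.sub_mul, ← Matrix.mul_sub]
    congr 2
    rw [smul_one_eq_diagonal, diagonal_sub]
  refine ⟨Uc * diagonal (fun i => ((lam i : ℂ) - z)⁻¹) * Vc, ?_, ?_, ?_⟩
  · rw [hA, hsandwich, diagonal_mul_diagonal]
    have h2 : (fun i => ((lam i : ℂ) - z) * ((lam i : ℂ) - z)⁻¹) = fun _ => (1 : ℂ) := by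
      funext i; exact mul_inv_cancel₀ (hne i)
    rw [h2, diagonal_one, mul_one, hUVc]
  · rw [hA, hsandwich, diagonal_mul_diagonal]
    have h2 : (fun i => ((lam i : ℂ) - z)⁻¹ * ((lam i : ℂ) - z)) = fun _ => (1 : ℂ) := by
      funext i; exact inv_mul_cancel₀ (hne i)
    rw [h2, diagonal_one, mul_one, hUVc]
  · rw [trace_mul_cycle, hVUc, one_mul, trace_diagonal]

end TelescopicAux


namespace TelescopicAux

open Matrix

lemma Pker_eq (z : ℂ) (l : ℝ) : Pker z l = (((l : ℂ) - z)⁻¹).im := by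
  rw [Complex.inv_im]
  unfold Pker
  have h1 : ((l : ℂ) - z).im = -z.im := by simp
  have h2 : Complex.normSq ((l : ℂ) - z) = (l - z.re) ^ 2 + z.im ^ 2 := by
    rw [Complex.normSq_apply]
    simp [Complex.sub_re, Complex.sub_im]
    ring
  rw [h1, h2, neg_neg]

lemma sum_Pker_eq {m : Type*} [Fintype m] [DecidableEq m]
    {M : Matrix m m ℝ} (hM : M.IsHermitian) {z : ℂ} (hz : z.im ≠ 0) :
    ∑ i, Pker z (hM.eigenvalues i) =
      (Matrix.trace ((M.map (fun a => (a : ℂ)) - z • 1)⁻¹)).im := by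
  obtain ⟨B, h1, _h2, h3⟩ := resolvent_spec hM hz
  rw [Matrix.inv_eq_right_inv h1, h3, Complex.im_sum]
  exact Finset.sum_congr rfl fun i _ => Pker_eq z (hM.eigenvalues i)

/-- The equivalence `Fin (2^k) × Fin (2^(n-k)) ≃ Fin (2^n)` given by `(a, j) ↦ j * 2^k + a`. -/
def blockEquiv {n k : ℕ} (hkn : k ≤ n) : Fin (2 ^ k) × Fin (2 ^ (n - k)) ≃ Fin (2 ^ n) where
  toFun p := UltrametricField.blockIdx hkn p.2 p.1
  invFun x := (⟨(x : ℕ) % 2 ^ k, Nat.mod_lt _ (Nat.two_pow_pos k)⟩,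
    ⟨(x : ℕ) / 2 ^ k, by
      have hx : (x : ℕ) < 2 ^ n := x.isLt
      have h : (2 : ℕ) ^ n = 2 ^ (n - k) * 2 ^ k := by rw [← pow_add]; congr 1; omega
      rw [Nat.div_lt_iff_lt_mul (Nat.two_pow_pos k), ← h]
      exact hx⟩)
  left_inv p := by
    obtain ⟨a, j⟩ := p
    have h1 : ((j : ℕ) * 2 ^ k + (a : ℕ)) % 2 ^ k = (a : ℕ) := by
      rw [add_comm, Nat.add_mul_mod_self_right, Nat.mod_eq_of_lt a.isLt]
    have h2 : ((j : ℕ) * 2 ^ k + (a : ℕ)) / 2 ^ k = (j : ℕ) :=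
      mul_add_div_eq (Nat.two_pow_pos k) a.isLt
    simp only [UltrametricField.blockIdx, Prod.mk.injEq]
    exact ⟨Fin.ext h1, Fin.ext h2⟩
  right_inv x := by
    simp only [UltrametricField.blockIdx]
    apply Fin.ext
    simp only []
    rw [mul_comm]
    exact Nat.div_add_mod _ _

end TelescopicAux


namespace TelescopicAux

open Matrix UltrametricField

variable {Ω : Type*} [MeasureSpace Ω] (F : UltrametricField Ω)

lemma Htrunc_apply (c : ℝ) (n m : ℕ) (ω : Ω) (x y : Fin (2 ^ n)) :
    F.Htrunc c n m ω x y =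
      ∑ r ∈ Finset.range (m + 1), (2 : ℝ) ^ (-((1 + c) / 2) * (r : ℝ)) * F.Φ n r ω x y := by
  unfold UltrametricField.Htrunc
  rw [Matrix.sum_apply]
  exact Finset.sum_congr rfl fun r _ => rfl

lemma Htrunc_offblock (c : ℝ) {k n : ℕ} (hkn : k ≤ n) {m : ℕ} (hm : m ≤ k) (ω : Ω)
    {j j' : Fin (2 ^ (n - k))} (hjj : j ≠ j') (a b : Fin (2 ^ k)) :
    F.Htrunc c n m ω (blockIdx hkn j a) (blockIdx hkn j' b) = 0 := by
  rw [Htrunc_apply]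
  refine Finset.sum_eq_zero fun r hr => ?_
  rw [Finset.mem_range] at hr
  have hzero : F.Φ n r ω (blockIdx hkn j a) (blockIdx hkn j' b) = 0 := by
    apply F.zero
    have : ((blockIdx hkn j a : Fin (2 ^ n)) : ℕ) = (j : ℕ) * 2 ^ k + (a : ℕ) := rfl
    calc r ≤ k := by omega
      _ < hdist ((j : ℕ) * 2 ^ k + (a : ℕ)) ((j' : ℕ) * 2 ^ k + (b : ℕ)) :=
        hdist_block_gt a.isLt b.isLt (fun h => hjj (Fin.ext h))
  rw [hzero, mul_zero]

lemma trace_inv_blocks (c : ℝ) {k n : ℕ} (hkn : k ≤ n) {m : ℕ} (hm : m ≤ k) (ω : Ω)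
    {z : ℂ} (hz : z.im ≠ 0) :
    Matrix.trace (((F.Htrunc c n m ω).map (fun a => (a : ℂ)) - z • 1)⁻¹) =
      ∑ j, Matrix.trace (((F.blockMat c hkn m j ω).map (fun a => (a : ℂ)) - z • 1)⁻¹) := by
  classical
  set e := blockEquiv hkn with he
  set A : Matrix (Fin (2 ^ n)) (Fin (2 ^ n)) ℂ :=
    (F.Htrunc c n m ω).map (fun a => (a : ℂ)) - z • 1 with hAdef
  set f : Fin (2 ^ (n - k)) → Matrix (Fin (2 ^ k)) (Fin (2 ^ k)) ℂ :=
    fun j => (F.blockMat c hkn m j ω).map (fun a => (a : ℂ)) - z • 1 with hfdef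
  choose g hg1 hg2 hg3 using fun j => resolvent_spec (F.isHermitian_blockMat c hkn m j ω) hz
  have hAsub : A.submatrix e e = blockDiagonal f := by
    ext ⟨a, j⟩ ⟨b, j'⟩
    rw [submatrix_apply, blockDiagonal_apply]
    by_cases hjj : j = j'
    · subst hjj
      rw [if_pos rfl]
      show A (blockIdx hkn j a) (blockIdx hkn j b) = f j a b
      rw [hAdef, hfdef]
      simp only [Matrix.sub_apply, Matrix.map_apply, Matrix.smul_apply, Matrix.one_apply,
        smul_eq_mul]
      have hbm : F.blockMat c hkn m j ω a b =
          F.Htrunc c n m ω (blockIdx hkn j a) (blockIdx hkn j b) := rfl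
      rw [hbm]
      congr 2
      have : blockIdx hkn j a = blockIdx hkn j b ↔ a = b := by
        constructor
        · intro h
          have := congrArg (Fin.val) h
          simp only [blockIdx] at this
          exact Fin.ext (by omega)
        · intro h; rw [h]
      simp only [this]
    · rw [if_neg hjj]
      show A (blockIdx hkn j a) (blockIdx hkn j' b) = 0
      rw [hAdef]
      simp only [Matrix.sub_apply, Matrix.map_apply, Matrix.smul_apply, Matrix.one_apply,
        smul_eq_mul]
      rw [Htrunc_offblock F c hkn hm ω hjj a b]
      have hne : blockIdx hkn j a ≠ blockIdx hkn j' b := by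
        intro h
        have := congrArg (Fin.val) h
        exact blockIdx_ne a.isLt b.isLt (fun hv => hjj (Fin.ext hv)) this
      rw [if_neg hne]
      simp
  have hA : A = (blockDiagonal f).submatrix (e.symm : Fin (2 ^ n) → _) e.symm := by
    rw [← hAsub, submatrix_submatrix]
    simp only [Equiv.self_comp_symm, submatrix_id_id]
  have hone : A * (blockDiagonal g).submatrix (e.symm : Fin (2 ^ n) → _) e.symm = 1 := by
    rw [hA, submatrix_mul_equiv, ← blockDiagonal_mul]
    have hfg : (fun j => f j * g j) = fun _ => (1 : Matrix (Fin (2 ^ k)) (Fin (2 ^ k)) ℂ) :=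
      funext fun j => hg1 j
    rw [hfg]
    rw [show (fun _ : Fin (2 ^ (n - k)) => (1 : Matrix (Fin (2 ^ k)) (Fin (2 ^ k)) ℂ)) =
      (1 : Fin (2 ^ (n - k)) → Matrix (Fin (2 ^ k)) (Fin (2 ^ k)) ℂ) from rfl,
      blockDiagonal_one, submatrix_one_equiv]
  have htrsub : ∀ X : Matrix (Fin (2 ^ k) × Fin (2 ^ (n - k)))
      (Fin (2 ^ k) × Fin (2 ^ (n - k))) ℂ,
      (X.submatrix (e.symm : Fin (2 ^ n) → _) e.symm).trace = X.trace := by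
    intro X
    rw [Matrix.trace, Matrix.trace]
    simp only [Matrix.diag, submatrix_apply]
    exact Equiv.sum_comp e.symm fun p => X p p
  rw [Matrix.inv_eq_right_inv hone, htrsub, trace_blockDiagonal]
  refine Finset.sum_congr rfl fun j _ => ?_
  rw [Matrix.inv_eq_right_inv (hg1 j)]

end TelescopicAux


namespace TelescopicAux

open Matrix UltrametricField

variable {Ω : Type*} [MeasureSpace Ω] (F : UltrametricField Ω)

lemma nuTrunc_eq_blocks (c : ℝ) {k n : ℕ} (hkn : k ≤ n) {m : ℕ} (hm : m ≤ k) (ω : Ω)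
    {z : ℂ} (hz : z.im ≠ 0) :
    F.nuTrunc c n m (Pker z) ω =
      (2 ^ n : ℝ)⁻¹ * ∑ j, ∑ i, Pker z (F.blockEig c hkn m j ω i) := by
  unfold UltrametricField.nuTrunc
  congr 1
  have h1 : ∑ i, Pker z (F.eigTrunc c n m ω i) =
      (Matrix.trace (((F.Htrunc c n m ω).map (fun a => (a : ℂ)) - z • 1)⁻¹)).im :=
    sum_Pker_eq (F.isHermitian_Htrunc c n m ω) hz
  have h2 : ∀ j, ∑ i, Pker z (F.blockEig c hkn m j ω i) =
      (Matrix.trace (((F.blockMat c hkn m j ω).map (fun a => (a : ℂ)) - z • 1)⁻¹)).im :=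
    fun j => sum_Pker_eq (F.isHermitian_blockMat c hkn m j ω) hz
  rw [h1, trace_inv_blocks F c hkn hm ω hz, Complex.im_sum]
  exact (Finset.sum_congr rfl fun j _ => (h2 j)).symm

lemma part1 (c : ℝ) {k n : ℕ} (hkn : k ≤ n) {z : ℂ} (hz : 0 < z.im) (ω : Ω) :
    F.nuTrunc c n k (Pker z) ω - F.nuTrunc c n (k - 1) (Pker z) ω =
      (2 ^ (n - k) : ℝ)⁻¹ * ∑ j : Fin (2 ^ (n - k)),
        ((2 ^ k : ℝ)⁻¹ * ∑ i, Pker z (F.blockEig c hkn k j ω i) -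
          (2 ^ k : ℝ)⁻¹ * ∑ i, Pker z (F.blockEig c hkn (k - 1) j ω i)) := by
  rw [nuTrunc_eq_blocks F c hkn le_rfl ω hz.ne', nuTrunc_eq_blocks F c hkn (Nat.sub_le k 1) ω hz.ne']
  have hpow : (2 ^ n : ℝ)⁻¹ = (2 ^ (n - k) : ℝ)⁻¹ * (2 ^ k : ℝ)⁻¹ := by
    rw [← mul_inv, ← pow_add]
    congr 2
    omega
  rw [hpow]
  rw [Finset.sum_sub_distrib, ← Finset.mul_sum, ← Finset.mul_sum]
  ring

end TelescopicAux


namespace TelescopicAux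

open MeasureTheory ProbabilityTheory

variable {Ω' : Type*} [MeasurableSpace Ω'] {μ : Measure Ω'}

/-- Restricting an independent family of real random variables along an injection. -/
lemma iIndepFun_comp_inj {ι ι' : Type*} {f : ι → Ω' → ℝ}
    (h : iIndepFun f μ) (g : ι' → ι) (hg : Function.Injective g) :
    iIndepFun (fun i' => f (g i')) μ := by
  classical
  rw [iIndepFun_iff_measure_inter_preimage_eq_mul] at h ⊢
  intro S sets hsets
  set sets' : ι → Set ℝ := fun i =>
    ⋂ i' ∈ S.filter (fun i' => g i' = i), sets i' with hsets'def
  have hkey : ∀ i' ∈ S, sets' (g i') = sets i' := by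
    intro i' hi'
    have hfil : S.filter (fun j => g j = g i') = {i'} := by
      ext x
      simp only [Finset.mem_filter, Finset.mem_singleton]
      constructor
      · rintro ⟨_, hx⟩; exact hg hx
      · rintro rfl; exact ⟨hi', rfl⟩
    rw [hsets'def]
    simp only [hfil]
    simp
  have hmeas' : ∀ i ∈ S.image g, MeasurableSet (sets' i) := by
    intro i _
    refine Finset.measurableSet_biInter _ fun i' hi' => ?_
    rw [Finset.mem_filter] at hi'
    exact hsets i' hi'.1
  have h1 := h (S.image g) hmeas'
  have hinter : (⋂ i ∈ S.image g, f i ⁻¹' sets' i) = ⋂ i' ∈ S, f (g i') ⁻¹' sets i' := by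
    ext x
    simp only [Set.mem_iInter, Finset.mem_image]
    constructor
    · intro hx i' hi'
      have := hx (g i') ⟨i', hi', rfl⟩
      rwa [hkey i' hi'] at this
    · rintro hx i ⟨i', hi', rfl⟩
      rw [hkey i' hi']
      exact hx i' hi'
  have hprod : ∏ i ∈ S.image g, μ (f i ⁻¹' sets' i) = ∏ i' ∈ S, μ (f (g i') ⁻¹' sets i') := by
    rw [Finset.prod_image (fun a _ b _ hab => hg hab)]
    exact Finset.prod_congr rfl fun i' hi' => by rw [hkey i' hi']
  rw [← hinter, ← hprod]
  exact h1

/-- Grouping an independent doubly-indexed family of real random variables. -/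
lemma iIndepFun_group {J Q : Type*} [Fintype Q] {Y : J × Q → Ω' → ℝ}
    (hmeas : ∀ p, Measurable (Y p))
    (h : iIndepFun Y μ) :
    iIndepFun
      (fun j ω q => Y (j, q) ω) μ := by
  classical
  rw [iIndepFun_iff_iIndep]
  set pisys : J → Set (Set Ω') := fun j =>
    {s | ∃ t : Q → Set ℝ, (∀ q, MeasurableSet (t q)) ∧ s = ⋂ q, Y (j, q) ⁻¹' t q} with hpisys
  have hVmeas : ∀ j, Measurable (fun ω q => Y (j, q) ω) :=
    fun j => measurable_pi_lambda _ fun q => hmeas (j, q)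
  refine iIndepSets.iIndep (fun j => (hVmeas j).comap_le) pisys (fun j => ?_) (fun j => ?_) ?_
  · -- IsPiSystem
    rintro s ⟨t, ht, rfl⟩ s' ⟨t', ht', rfl⟩ -
    refine ⟨fun q => t q ∩ t' q, fun q => (ht q).inter (ht' q), ?_⟩
    simp only [Set.preimage_inter]
    rw [Set.iInter_inter_distrib]
  · -- generateFrom
    rw [← generateFrom_pi (α := fun _ : Q => ℝ), MeasurableSpace.comap_generateFrom]
    congr 1
    ext s
    simp only [Set.mem_image, Set.mem_setOf_eq, hpisys]
    constructor
    · rintro ⟨u, ⟨t, ht, rfl⟩, rfl⟩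
      refine ⟨t, fun q => ht q (Set.mem_univ q), ?_⟩
      ext ω
      simp [Set.mem_pi]
    · rintro ⟨t, ht, rfl⟩
      refine ⟨Set.pi Set.univ t, ⟨t, fun q _ => ht q, rfl⟩, ?_⟩
      ext ω
      simp [Set.mem_pi]
  · -- iIndepSets
    rw [iIndepSets_iff]
    intro S E hE
    choose t ht hteq using hE
    set T : J × Q → Set ℝ := fun p =>
      if h' : p.1 ∈ S then t p.1 h' p.2 else Set.univ with hT
    have hTmeas : ∀ p : J × Q, p ∈ S ×ˢ (Finset.univ : Finset Q) → MeasurableSet (T p) := by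
      intro p _
      rw [hT]
      dsimp only
      split_ifs with h'
      · exact ht p.1 h' p.2
      · exact MeasurableSet.univ
    have hinter : (⋂ j ∈ S, E j) = ⋂ p ∈ S ×ˢ (Finset.univ : Finset Q), Y p ⁻¹' T p := by
      ext ω
      simp only [Set.mem_iInter, Finset.mem_product, Finset.mem_univ, and_true]
      constructor
      · intro hω p hp
        have := hω p.1 hp
        rw [hteq p.1 hp] at this
        simp only [Set.mem_iInter] at this
        rw [hT]
        simpa [hp] using this p.2
      · intro hω j hj
        rw [hteq j hj]
        simp only [Set.mem_iInter]
        intro q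
        have := hω (j, q) hj
        rw [hT] at this
        simpa [hj] using this
    have hsingle : ∀ j ∈ S, μ (E j) = ∏ q : Q, μ (Y (j, q) ⁻¹' T (j, q)) := by
      intro j hj
      have h1 := h.measure_inter_preimage_eq_mul ({j} ×ˢ (Finset.univ : Finset Q))
        (sets := T) (fun p hp => hTmeas p (by
          rw [Finset.mem_product] at hp ⊢
          exact ⟨by simp only [Finset.mem_singleton] at hp; rw [hp.1]; exact hj, hp.2⟩))
      have h2 : (⋂ p ∈ ({j} ×ˢ (Finset.univ : Finset Q)), Y p ⁻¹' T p) = E j := by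
        ext ω
        simp only [Set.mem_iInter, Finset.mem_product, Finset.mem_singleton, Finset.mem_univ,
          and_true]
        rw [hteq j hj]
        simp only [Set.mem_iInter]
        constructor
        · intro hω q
          have := hω (j, q) rfl
          rw [hT] at this
          simpa [hj] using this
        · intro hω p hp
          rcases p with ⟨j', q⟩
          dsimp only at hp
          subst hp
          rw [hT]
          simp only [dif_pos hj]
          exact hω q
      rw [← h2, h1, Finset.prod_product]
      simp
    rw [hinter, h.measure_inter_preimage_eq_mul _ hTmeas, Finset.prod_product]
    refine (Finset.prod_congr rfl fun j hj => ?_).symm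
    rw [hsingle j hj]

end TelescopicAux


namespace TelescopicAux

open MeasureTheory ProbabilityTheory

variable {Ω' : Type*} [MeasurableSpace Ω'] {μ : Measure Ω'}

/-- The joint law of a finite independent family is the product of the marginals. -/
lemma map_eq_pi {Q : Type*} [Fintype Q] {Y : Q → Ω' → ℝ} (hmeas : ∀ q, Measurable (Y q))
    (h : iIndepFun Y μ)
    (ν : Q → Measure ℝ) [∀ q, SigmaFinite (ν q)] (hν : ∀ q, Measure.map (Y q) μ = ν q) :
    Measure.map (fun ω q => Y q ω) μ = Measure.pi ν := by
  refine (Measure.pi_eq fun s hs => ?_).symm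
  rw [Measure.map_apply (measurable_pi_lambda _ hmeas) (MeasurableSet.univ_pi hs)]
  have hpre : (fun ω q => Y q ω) ⁻¹' Set.pi Set.univ s = ⋂ q, Y q ⁻¹' s q := by
    ext ω
    simp [Set.mem_pi]
  rw [hpre, h.meas_iInter fun q => ⟨s q, hs q, rfl⟩]
  exact Finset.prod_congr rfl fun q _ => by
    rw [← hν q, Measure.map_apply (hmeas q) (hs q)]

end TelescopicAux


namespace TelescopicAux

open Matrix UltrametricField MeasureTheory ProbabilityTheory

/-- The index type of the independent matrix entries at block scale `k`:
scales `r ≤ k` and upper-triangular positions. -/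
def QIdx (k : ℕ) : Type :=
  {q : Fin (k + 1) × Fin (2 ^ k) × Fin (2 ^ k) // (q.2.1 : ℕ) ≤ (q.2.2 : ℕ)}

instance (k : ℕ) : Fintype (QIdx k) := by
  unfold QIdx
  infer_instance

/-- The symmetrized entry at `(a, b)` of scale `r`, read off from an entry vector. -/
def entryOf {k : ℕ} (v : QIdx k → ℝ) (r : ℕ) (a b : Fin (2 ^ k)) : ℝ :=
  if hr : r < k + 1 then
    (if hab : (a : ℕ) ≤ (b : ℕ) then v ⟨(⟨r, hr⟩, a, b), hab⟩
     else v ⟨(⟨r, hr⟩, b, a), le_of_not_ge hab⟩)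
  else 0

/-- Building the truncated Hamiltonian from an entry vector. -/
noncomputable def buildMat (c : ℝ) {k : ℕ} (m : ℕ) (v : QIdx k → ℝ) : Matrix (Fin (2 ^ k)) (Fin (2 ^ k)) ℝ :=
  Matrix.of fun a b =>
    ∑ r ∈ Finset.range (m + 1), (2 : ℝ) ^ (-((1 + c) / 2) * (r : ℝ)) * entryOf v r a b

lemma measurable_entryOf {k : ℕ} (r : ℕ) (a b : Fin (2 ^ k)) :
    Measurable fun v : QIdx k → ℝ => entryOf v r a b := by
  unfold entryOf
  split_ifs with h1 h2
  · exact measurable_pi_apply _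
  · exact measurable_pi_apply _
  · exact measurable_const

lemma measurable_buildMat (c : ℝ) {k : ℕ} (m : ℕ) :
    Measurable (buildMat c (k := k) m) := by
  show Measurable fun v => buildMat c m v
  apply measurable_pi_lambda
  intro a
  apply measurable_pi_lambda
  intro b
  simp only [buildMat, Matrix.of_apply]
  apply Finset.measurable_sum
  intro r _
  exact (measurable_entryOf r a b).const_mul _

variable {Ω : Type*} [MeasureSpace Ω] (F : UltrametricField Ω)

lemma Phi_symm (n r : ℕ) (ω : Ω) (x y : Fin (2 ^ n)) :
    F.Φ n r ω x y = F.Φ n r ω y x := by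
  have h := (F.herm n r ω).apply y x
  rwa [star_trivial] at h

lemma blockMat_eq_buildMat (c : ℝ) {k n : ℕ} (hkn : k ≤ n) {m : ℕ} (hm : m ≤ k)
    (j : Fin (2 ^ (n - k))) (ω : Ω) :
    F.blockMat c hkn m j ω = buildMat c m
      (fun q : QIdx k =>
        F.Φ n (q.1.1 : ℕ) ω (blockIdx hkn j q.1.2.1) (blockIdx hkn j q.1.2.2)) := by
  ext a b
  show F.Htrunc c n m ω (blockIdx hkn j a) (blockIdx hkn j b) = _
  rw [Htrunc_apply, buildMat, Matrix.of_apply]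
  refine Finset.sum_congr rfl fun r hr => ?_
  rw [Finset.mem_range] at hr
  have hrk : r < k + 1 := by omega
  congr 1
  unfold entryOf
  rw [dif_pos hrk]
  by_cases hab : (a : ℕ) ≤ (b : ℕ)
  · rw [dif_pos hab]
  · rw [dif_neg hab]
    exact Phi_symm F n r ω _ _

lemma Htrunc_eq_buildMat (c : ℝ) {k m : ℕ} (hm : m ≤ k) (ω : Ω) :
    F.Htrunc c k m ω = buildMat c m
      (fun q : QIdx k => F.Φ k (q.1.1 : ℕ) ω q.1.2.1 q.1.2.2) := by
  ext a b
  rw [Htrunc_apply, buildMat, Matrix.of_apply]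
  refine Finset.sum_congr rfl fun r hr => ?_
  rw [Finset.mem_range] at hr
  have hrk : r < k + 1 := by omega
  congr 1
  unfold entryOf
  rw [dif_pos hrk]
  by_cases hab : (a : ℕ) ≤ (b : ℕ)
  · rw [dif_pos hab]
  · rw [dif_neg hab]
    exact Phi_symm F k r ω _ _

end TelescopicAux


namespace TelescopicAux

open Matrix UltrametricField MeasureTheory ProbabilityTheory

variable {k n : ℕ}

/-- Embedding of block-entry indices into the global entry index set. -/
def injBlock (hkn : k ≤ n) (j : Fin (2 ^ (n - k))) (q : QIdx k) :
    {p : ℕ × Fin (2 ^ n) × Fin (2 ^ n) // p.1 ≤ n ∧ (p.2.1 : ℕ) ≤ (p.2.2 : ℕ)} :=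
  ⟨((q.1.1 : ℕ), blockIdx hkn j q.1.2.1, blockIdx hkn j q.1.2.2),
   ⟨le_trans (Nat.lt_succ_iff.mp q.1.1.isLt) hkn, by
      show (j : ℕ) * 2 ^ k + (q.1.2.1 : ℕ) ≤ (j : ℕ) * 2 ^ k + (q.1.2.2 : ℕ)
      have := q.2
      omega⟩⟩

lemma block_decode {k' j j' a a' : ℕ} (ha : a < 2 ^ k') (ha' : a' < 2 ^ k')
    (h : j * 2 ^ k' + a = j' * 2 ^ k' + a') : j = j' ∧ a = a' := by
  have h1 := mul_add_div_eq (j := j) (Nat.two_pow_pos k') ha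
  have h2 := mul_add_div_eq (j := j') (Nat.two_pow_pos k') ha'
  have hj : j = j' := by rw [← h1, ← h2, h]
  subst hj
  exact ⟨rfl, Nat.add_left_cancel h⟩

lemma injBlock_pair_injective (hkn : k ≤ n) :
    Function.Injective (fun p : Fin (2 ^ (n - k)) × QIdx k => injBlock hkn p.1 p.2) := by
  rintro ⟨j, q⟩ ⟨j', q'⟩ h
  have h' := congrArg Subtype.val h
  rw [Prod.ext_iff] at h'
  obtain ⟨h1, h23⟩ := h'
  rw [Prod.ext_iff] at h23
  obtain ⟨h2, h3⟩ := h23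
  have h2' := congrArg Fin.val h2
  have h3' := congrArg Fin.val h3
  have e2 := block_decode q.1.2.1.isLt q'.1.2.1.isLt h2'
  have e3 := block_decode q.1.2.2.isLt q'.1.2.2.isLt h3'
  have hjj : j = j' := Fin.ext e2.1
  have hq : q = q' := by
    apply Subtype.ext
    exact Prod.ext (Fin.ext h1) (Prod.ext (Fin.ext e2.2) (Fin.ext e3.2))
  exact Prod.ext hjj hq

lemma injBlock_injective (hkn : k ≤ n) (j : Fin (2 ^ (n - k))) :
    Function.Injective (injBlock hkn j) := fun q q' h =>
  (Prod.ext_iff.mp (injBlock_pair_injective hkn (a₁ := (j, q)) (a₂ := (j, q')) h)).2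

/-- Embedding of block-entry indices into the entry index set at volume `k`. -/
def injSmall (k : ℕ) (q : QIdx k) :
    {p : ℕ × Fin (2 ^ k) × Fin (2 ^ k) // p.1 ≤ k ∧ (p.2.1 : ℕ) ≤ (p.2.2 : ℕ)} :=
  ⟨((q.1.1 : ℕ), q.1.2.1, q.1.2.2), ⟨Nat.lt_succ_iff.mp q.1.1.isLt, q.2⟩⟩

lemma injSmall_injective (k : ℕ) : Function.Injective (injSmall k) := by
  rintro ⟨⟨r, a, b⟩, hq⟩ ⟨⟨r', a', b'⟩, hq'⟩ h
  have h' := congrArg Subtype.val h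
  rw [Prod.ext_iff] at h'
  obtain ⟨h1, h23⟩ := h'
  rw [Prod.ext_iff] at h23
  apply Subtype.ext
  exact Prod.ext (Fin.ext h1) (Prod.ext h23.1 h23.2)

variable {Ω : Type*} [MeasureSpace Ω] (F : UltrametricField Ω)
variable [IsProbabilityMeasure (ℙ : Measure Ω)]

lemma part2 (c : ℝ) (hkn : k ≤ n) :
    iIndepFun
      (fun (j : Fin (2 ^ (n - k))) (ω : Ω) =>
        (F.blockMat c hkn k j ω, F.blockMat c hkn (k - 1) j ω)) ℙ := by
  classical
  have hmaster := iIndepFun_comp_inj (F.indep n)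
    (fun p : Fin (2 ^ (n - k)) × QIdx k => injBlock hkn p.1 p.2)
    (injBlock_pair_injective hkn)
  have hgrp := iIndepFun_group (fun p => F.meas n _ _ _) hmaster
  have hcomp := hgrp.comp
    (fun _ v => (buildMat c k v, buildMat c (k - 1) v))
    (fun _ => (measurable_buildMat c k).prodMk (measurable_buildMat c (k - 1)))
  have heq : (fun (j : Fin (2 ^ (n - k))) (ω : Ω) =>
      (F.blockMat c hkn k j ω, F.blockMat c hkn (k - 1) j ω)) =
      fun j => (fun v => (buildMat c k v, buildMat c (k - 1) v)) ∘
        (fun ω (q : QIdx k) =>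
          F.Φ n (q.1.1 : ℕ) ω (blockIdx hkn j q.1.2.1) (blockIdx hkn j q.1.2.2)) := by
    funext j ω
    simp only [Function.comp_apply]
    rw [blockMat_eq_buildMat F c hkn le_rfl, blockMat_eq_buildMat F c hkn (Nat.sub_le k 1)]
  rw [heq]
  exact hcomp

lemma part3 (c : ℝ) (hkn : k ≤ n) (j : Fin (2 ^ (n - k))) :
    Measure.map (fun ω => (F.blockMat c hkn k j ω, F.blockMat c hkn (k - 1) j ω)) ℙ =
      Measure.map (fun ω => (F.Htrunc c k k ω, F.Htrunc c k (k - 1) ω)) ℙ := by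
  classical
  have hVmeas : ∀ q : QIdx k, Measurable fun ω =>
      F.Φ n (q.1.1 : ℕ) ω (blockIdx hkn j q.1.2.1) (blockIdx hkn j q.1.2.2) :=
    fun q => F.meas n _ _ _
  have hUmeas : ∀ q : QIdx k, Measurable fun ω => F.Φ k (q.1.1 : ℕ) ω q.1.2.1 q.1.2.2 :=
    fun q => F.meas k _ _ _
  have hiV := iIndepFun_comp_inj (F.indep n) (injBlock hkn j) (injBlock_injective hkn j)
  have hiU := iIndepFun_comp_inj (F.indep k) (injSmall k) (injSmall_injective k)
  have hVlaw : ∀ q : QIdx k, Measure.map (fun ω =>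
      F.Φ n (q.1.1 : ℕ) ω (blockIdx hkn j q.1.2.1) (blockIdx hkn j q.1.2.2)) ℙ =
      gaussianReal 0 (entryVar (q.1.1 : ℕ) (q.1.2.1 : ℕ) (q.1.2.2 : ℕ)) := by
    intro q
    rw [F.gauss n (q.1.1 : ℕ) (le_trans (Nat.lt_succ_iff.mp q.1.1.isLt) hkn)]
    congr 1
    exact entryVar_block q.1.2.1.isLt q.1.2.2.isLt (q.1.1 : ℕ)
  have hUlaw : ∀ q : QIdx k, Measure.map (fun ω => F.Φ k (q.1.1 : ℕ) ω q.1.2.1 q.1.2.2) ℙ =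
      gaussianReal 0 (entryVar (q.1.1 : ℕ) (q.1.2.1 : ℕ) (q.1.2.2 : ℕ)) := by
    intro q
    exact F.gauss k (q.1.1 : ℕ) (Nat.lt_succ_iff.mp q.1.1.isLt) q.1.2.1 q.1.2.2
  have hmapV := map_eq_pi hVmeas hiV _ hVlaw
  have hmapU := map_eq_pi hUmeas hiU _ hUlaw
  have hG : Measurable fun v : QIdx k → ℝ => (buildMat c k v, buildMat c (k - 1) v) :=
    (measurable_buildMat c k).prodMk (measurable_buildMat c (k - 1))
  have hfV : (fun ω => (F.blockMat c hkn k j ω, F.blockMat c hkn (k - 1) j ω)) =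
      (fun v : QIdx k → ℝ => (buildMat c k v, buildMat c (k - 1) v)) ∘
        (fun ω (q : QIdx k) =>
          F.Φ n (q.1.1 : ℕ) ω (blockIdx hkn j q.1.2.1) (blockIdx hkn j q.1.2.2)) := by
    funext ω
    simp only [Function.comp_apply]
    rw [blockMat_eq_buildMat F c hkn le_rfl, blockMat_eq_buildMat F c hkn (Nat.sub_le k 1)]
  have hfU : (fun ω => (F.Htrunc c k k ω, F.Htrunc c k (k - 1) ω)) =
      (fun v : QIdx k → ℝ => (buildMat c k v, buildMat c (k - 1) v)) ∘
        (fun ω (q : QIdx k) => F.Φ k (q.1.1 : ℕ) ω q.1.2.1 q.1.2.2) := by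
    funext ω
    simp only [Function.comp_apply]
    rw [Htrunc_eq_buildMat F c le_rfl, Htrunc_eq_buildMat F c (Nat.sub_le k 1)]
  rw [hfV, hfU, ← Measure.map_map hG (measurable_pi_lambda _ hVmeas),
    ← Measure.map_map hG (measurable_pi_lambda _ hUmeas), hmapV, hmapU]

end TelescopicAux


/-- **The telescopic term as an average of independent copies.** For any `0 < m < k ≤ n`
(here `m = k - 1`) and any `z ∈ ℂ₊`, the difference `ν_{n,k}(P_z) - ν_{n,k-1}(P_z)` equals
`2^{-(n-k)} ∑_{j=1}^{2^{n-k}} (ν_k^{(j)}(P_z) - ν_{k,k-1}^{(j)}(P_z))`, where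
`ν_k^{(j)}` and `ν_{k,k-1}^{(j)}` are the density of states measures of the `j`-th diagonal
blocks (at scale `k`) of `H_{n,k}` and `H_{n,k-1}`; the pairs of blocks are independent over
`j` and each pair is distributed as `(H_k, H_{k,k-1})`, so that the pairs
`(ν_k^{(j)}, ν_{k,k-1}^{(j)})` are independent and each is distributed as the pair
`(ν_k, ν_{k,k-1})` of an independent copy of `(H_k, H_{k,k-1})`. -/
theorem telescopic_term {Ω : Type*} [MeasureSpace Ω] [IsProbabilityMeasure (ℙ : Measure Ω)]
    (F : UltrametricField Ω) (c : ℝ) {k n : ℕ} (hk : 0 < k) (hkn : k ≤ n)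
    (z : ℂ) (hz : 0 < z.im) :
    (∀ ω : Ω, F.nuTrunc c n k (Pker z) ω - F.nuTrunc c n (k - 1) (Pker z) ω =
        (2 ^ (n - k) : ℝ)⁻¹ * ∑ j : Fin (2 ^ (n - k)),
          ((2 ^ k : ℝ)⁻¹ * ∑ i, Pker z (F.blockEig c hkn k j ω i) -
            (2 ^ k : ℝ)⁻¹ * ∑ i, Pker z (F.blockEig c hkn (k - 1) j ω i))) ∧
    iIndepFun
      (fun (j : Fin (2 ^ (n - k))) (ω : Ω) =>
        (F.blockMat c hkn k j ω, F.blockMat c hkn (k - 1) j ω)) ℙ ∧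
    (∀ j : Fin (2 ^ (n - k)),
        Measure.map (fun ω => (F.blockMat c hkn k j ω, F.blockMat c hkn (k - 1) j ω)) ℙ =
          Measure.map (fun ω => (F.Htrunc c k k ω, F.Htrunc c k (k - 1) ω)) ℙ) := by
  exact ⟨fun ω => TelescopicAux.part1 F c hkn hz ω, TelescopicAux.part2 F c hkn,
    fun j => TelescopicAux.part3 F c hkn j⟩
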